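/- Let t = (t₁, t₂) ∈ ℝ² and set W² = 1 + t₁² + t₂². If W² > 3, then the symmetric 2×2 matrix with entries a_{εη} = δ_{εη} − t_ε t_η / W² + (2(W² + 3)/((W² − 1)(W² − 3))) · t_ε t_η / W² (ε, η ∈ {1,2}) is positive definite; that is, Σ_{ε,η} a_{εη} ξ_ε ξ_η > 0 for every ξ ∈ ℝ² \ {0}. -/

import Mathlib

/-- Ellipticity: when `W² = 1 + t₁² + t₂² > 3`, the coefficient matrix
`a_{εη} = δ_{εη} - t_ε t_η / W² + (2(W²+3)/((W²-1)(W²-3))) t_ε t_η / W²`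
of the Kropina minimal-graph equation is positive definite. -/
theorem stmt_5 (t : Fin 2 → ℝ) (W2 : ℝ) (hW2 : W2 = 1 + t 0 ^ 2 + t 1 ^ 2) (h3 : 3 < W2)
    (ξ : Fin 2 → ℝ) (hξ : ξ ≠ 0) :
    0 < ∑ ε : Fin 2, ∑ η : Fin 2,
      ((if ε = η then (1 : ℝ) else 0) - t ε * t η / W2 +
        (2 * (W2 + 3) / ((W2 - 1) * (W2 - 3))) * (t ε * t η / W2)) * ξ ε * ξ η := by
  have hW : (0:ℝ) < W2 := by linarith
  have h1 : (0:ℝ) < W2 - 1 := by linarith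
  have h2 : (0:ℝ) < W2 - 3 := by linarith
  have hQ : 0 < ξ 0 ^ 2 + ξ 1 ^ 2 := by
    rcases Function.ne_iff.mp hξ with ⟨i, hi⟩
    fin_cases i <;> simp at hi <;> positivity
  have key : (∑ ε : Fin 2, ∑ η : Fin 2,
      ((if ε = η then (1 : ℝ) else 0) - t ε * t η / W2 +
        (2 * (W2 + 3) / ((W2 - 1) * (W2 - 3))) * (t ε * t η / W2)) * ξ ε * ξ η) =
      (W2 * ((W2-1)*(W2-3)) * (ξ 0 ^ 2 + ξ 1 ^ 2)
        - ((W2-1)*(W2-3)) * (t 0 * ξ 0 + t 1 * ξ 1)^2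
        + 2 * (W2 + 3) * (t 0 * ξ 0 + t 1 * ξ 1)^2) / (W2 * ((W2-1)*(W2-3))) := by
    rw [Fin.sum_univ_two, Fin.sum_univ_two, Fin.sum_univ_two]
    simp only [Fin.isValue, Fin.reduceEq, ↓reduceIte]
    field_simp
    ring
  rw [key]
  apply div_pos _ (by positivity)
  have cs : (t 0 * ξ 0 + t 1 * ξ 1)^2 ≤ (W2 - 1) * (ξ 0 ^ 2 + ξ 1 ^ 2) := by
    nlinarith [sq_nonneg (t 0 * ξ 1 - t 1 * ξ 0)]
  nlinarith [sq_nonneg (t 0 * ξ 0 + t 1 * ξ 1), mul_pos (mul_pos h1 h2) hQ,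
    mul_le_mul_of_nonneg_left cs (le_of_lt h2)]
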